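/- Let $n_0$ be a Binomial$(m,\alpha)$ random variable with $\alpha\in(0,1)$, and set $n_1 = m - n_0$. Then $\mathbb{E}\Big[\Big[\frac{\alpha}{1-\alpha}-\frac{n_0}{n_1+1}\Big]_+\Big] = \frac{\alpha}{1-\alpha}\,\mathbb{P}\big(n_0 = \lfloor \alpha(m+1)\rfloor\big),$ where $[x]_+ = \max(x,0)$. -/

import Mathlib

open Finset

/-- For `n₀ ~ Binomial(m, α)` and `n₁ = m - n₀`, assuming `α(m+1)` is not an integer,
`E[[α/(1-α) - n₀/(n₁+1)]₊] = (α/(1-α)) ⬝ P(n₀ = ⌊α(m+1)⌋)`. -/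
theorem stmt7 (m : ℕ) (α : ℝ) (hα : α ∈ Set.Ioo (0 : ℝ) 1)
    (hnotint : ∀ z : ℤ, α * ((m : ℝ) + 1) ≠ (z : ℝ)) :
    (∑ k ∈ Finset.range (m + 1),
        max (α / (1 - α) - (k : ℝ) / (((m : ℝ) - k) + 1)) 0 *
          ((Nat.choose m k : ℝ) * α ^ k * (1 - α) ^ (m - k)))
      = (α / (1 - α)) *
        ((Nat.choose m ⌊α * ((m : ℝ) + 1)⌋₊ : ℝ) * α ^ ⌊α * ((m : ℝ) + 1)⌋₊ *
          (1 - α) ^ (m - ⌊α * ((m : ℝ) + 1)⌋₊)) := by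
  obtain ⟨hα0, hα1⟩ := hα
  have h1α : (0:ℝ) < 1 - α := by linarith
  set c := α / (1 - α) with hc
  set p : ℕ → ℝ := fun k => (Nat.choose m k : ℝ) * α ^ k * (1 - α) ^ (m - k) with hp
  set N := ⌊α * ((m : ℝ) + 1)⌋₊ with hN
  have hpos : (0:ℝ) < α * ((m:ℝ)+1) := by positivity
  have hNle : (N : ℝ) ≤ α * ((m:ℝ)+1) := Nat.floor_le hpos.le
  have hNlt : (N : ℝ) < α * ((m:ℝ)+1) := lt_of_le_of_ne hNle (fun h => hnotint N (by exact_mod_cast h.symm))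
  have hltN1 : α * ((m:ℝ)+1) < (N:ℝ) + 1 := Nat.lt_floor_add_one _
  have hNm : N ≤ m := by
    have h1 : α * ((m:ℝ)+1) < ((m:ℝ)+1) := by nlinarith
    have h2 : N < m + 1 := by
      rw [hN, Nat.floor_lt hpos.le]
      push_cast
      exact h1
    omega
  have key : ∀ j : ℕ, j + 1 ≤ m →
      ((j:ℝ)+1) / ((m:ℝ) - ((j:ℝ)+1) + 1) * p (j+1) = c * p j := by
    intro j hj
    have hjm : (j:ℝ) < (m:ℝ) := by exact_mod_cast hj
    have hch : (Nat.choose m (j+1) : ℝ) * ((j:ℝ)+1) = (Nat.choose m j : ℝ) * ((m:ℝ) - j) := by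
      have h := Nat.choose_succ_right_eq m j
      have h2 : ((m.choose (j+1) * (j+1) : ℕ) : ℝ) = ((m.choose j * (m - j) : ℕ) : ℝ) := by
        exact_mod_cast h
      push_cast [Nat.cast_sub (show j ≤ m by omega)] at h2
      linarith [h2]
    simp only [hp]
    rw [show m - j = (m - (j+1)) + 1 from by omega, pow_succ, pow_succ]
    have hden : (m:ℝ) - ((j:ℝ)+1) + 1 = (m:ℝ) - j := by ring
    rw [hden, hc]
    have hdpos : (0:ℝ) < (m:ℝ) - j := by linarith
    field_simp
    linear_combination hch
  have tele : ∀ n, n ≤ m → ∑ k ∈ range (n+1), (c - (k:ℝ)/((m:ℝ)-k+1)) * p k = c * p n := by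
    intro n hn
    induction n with
    | zero => simp
    | succ j ih =>
      rw [Finset.sum_range_succ, ih (by omega)]
      have hk := key j hn
      push_cast
      rw [sub_mul, hk]
      ring
  have hmax_pos : ∀ k, k ≤ N → max (c - (k:ℝ)/((m:ℝ)-k+1)) 0 = c - (k:ℝ)/((m:ℝ)-k+1) := by
    intro k hk
    apply max_eq_left
    have hkm : (k:ℝ) ≤ (m:ℝ) := by exact_mod_cast le_trans hk hNm
    have hd : (0:ℝ) < (m:ℝ) - k + 1 := by linarith
    have hkα : (k:ℝ) < α * ((m:ℝ)+1) :=
      lt_of_le_of_lt (by exact_mod_cast hk : (k:ℝ) ≤ (N:ℝ)) hNlt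
    rw [hc, sub_nonneg, div_le_div_iff₀ hd h1α]
    nlinarith
  have hmax_zero : ∀ k, N + 1 ≤ k → k ≤ m → max (c - (k:ℝ)/((m:ℝ)-k+1)) 0 = 0 := by
    intro k hk1 hk2
    apply max_eq_right
    have hkm : (k:ℝ) ≤ (m:ℝ) := by exact_mod_cast hk2
    have hd : (0:ℝ) < (m:ℝ) - k + 1 := by linarith
    have hkα : α * ((m:ℝ)+1) ≤ (k:ℝ) :=
      le_trans hltN1.le (by exact_mod_cast hk1)
    rw [hc, sub_nonpos, div_le_div_iff₀ h1α hd]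
    nlinarith
  show (∑ k ∈ Finset.range (m + 1), max (c - (k : ℝ) / (((m : ℝ) - k) + 1)) 0 * p k) = c * p N
  rw [← Finset.sum_range_add_sum_Ico _ (show N+1 ≤ m+1 by omega)]
  have h2 : ∑ k ∈ Ico (N+1) (m+1), max (c - (k:ℝ)/((m:ℝ)-k+1)) 0 * p k = 0 := by
    apply Finset.sum_eq_zero
    intro k hk
    rw [Finset.mem_Ico] at hk
    rw [hmax_zero k hk.1 (by omega), zero_mul]
  have h1 : ∑ k ∈ range (N+1), max (c - (k:ℝ)/((m:ℝ)-k+1)) 0 * p k = c * p N := by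
    rw [Finset.sum_congr rfl (fun k hk => by
      rw [hmax_pos k (by rw [Finset.mem_range] at hk; omega)])]
    exact tele N hNm
  rw [h1, h2, add_zero]
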